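/- arXiv:2104.11537 — 2 statements merged into one kernel-verified Lean document; each statement's English description precedes it below -/
import Mathlib

section
/- Let Y(X) = A X Aᴴ + a·A·diag(X)·Aᴴ + b·diag(C X Cᴴ) + F with a, b ≥ 0 real scalars, A ∈ ℂ^{m×n}, C ∈ ℂ^{m×n}, F positive definite Hermitian. Then the gradient of X ↦ ln det(Y(X)) with respect to the Hermitian matrix X equals Aᴴ Y⁻¹ A + a·diag(Aᴴ Y⁻¹ A) + b·Cᴴ diag(Y⁻¹) C. -/
open Matrix Topology Asymptotics
open scoped ComplexOrder

attribute [local instance] Matrix.frobeniusNormedAddCommGroup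

/-- `ln det` via the real part of the determinant. -/
noncomputable def logdet {k : Type*} [Fintype k] [DecidableEq k]
    (M : Matrix k k ℂ) : ℝ := Real.log M.det.re

/-- `diag M`: the diagonal matrix obtained by zeroing the off-diagonal entries of `M`. -/
def dg {k : Type*} [Fintype k] [DecidableEq k] (M : Matrix k k ℂ) : Matrix k k ℂ :=
  Matrix.diagonal fun i => M i i

section helpers

attribute [local instance] Matrix.frobeniusNormedSpace

variable {k : Type*} [Fintype k] [DecidableEq k]

lemma sum_det_updateRow (M E : Matrix k k ℂ) :
    ∑ i, (M.updateRow i (E i)).det = (M.adjugate * E).trace := by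
  have h : ∀ i, (M.updateRow i (E i)).det = ∑ j, M.adjugate j i * E i j := by
    intro i
    have h1 : (M.updateRow i (E i)).det = cramer Mᵀ (E i) i := by
      rw [cramer_apply, updateCol_transpose, det_transpose]
    rw [h1, cramer_eq_adjugate_mulVec, ← adjugate_transpose]
    simp [Matrix.mulVec, dotProduct, Matrix.transpose_apply]
  simp only [h, Matrix.trace, Matrix.diag, Matrix.mul_apply]
  exact Finset.sum_comm

/-- det as continuous multilinear map in the rows. -/
noncomputable def detCMM (k : Type*) [Fintype k] [DecidableEq k] :
    ContinuousMultilinearMap ℂ (fun _ : k => (k → ℂ)) ℂ :=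
  MultilinearMap.mkContinuous
    (Matrix.detRowAlternating : (k → ℂ) [⋀^k]→ₗ[ℂ] ℂ).toMultilinearMap
    (Nat.factorial (Fintype.card k)) (by
      intro v
      have h1 : (Matrix.detRowAlternating (R := ℂ) (n := k)).toMultilinearMap v
          = (Matrix.of v).det := rfl
      rw [h1, Matrix.det_apply]
      refine (norm_sum_le _ _).trans ?_
      have h2 : ∀ σ : Equiv.Perm k,
          ‖Equiv.Perm.sign σ • ∏ i, Matrix.of v (σ i) i‖ ≤ ∏ i, ‖v i‖ := by
        intro σ
        rw [Units.smul_def, norm_zsmul ℝ]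
        have : ‖((Equiv.Perm.sign σ : ℤ) : ℝ)‖ = 1 := by
          rcases Int.units_eq_one_or (Equiv.Perm.sign σ) with h | h <;> simp [h]
        rw [this, one_mul, norm_prod]
        calc ∏ i, ‖Matrix.of v (σ i) i‖ ≤ ∏ i, ‖v (σ i)‖ := by
              refine Finset.prod_le_prod (fun i _ => norm_nonneg _) (fun i _ => ?_)
              exact norm_le_pi_norm (v (σ i)) i
          _ = ∏ i, ‖v i‖ := Equiv.prod_comp σ (fun j => ‖v j‖)
      refine (Finset.sum_le_sum (fun σ _ => h2 σ)).trans ?_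
      rw [Finset.sum_const, Finset.card_univ, nsmul_eq_mul]
      simp [Fintype.card_perm])

theorem hasFDerivAt_det (M : Matrix k k ℂ) :
    HasFDerivAt (fun N : Matrix k k ℂ => N.det)
      (LinearMap.toContinuousLinearMap
        ({ toFun := fun E : Matrix k k ℂ => (M.adjugate * E).trace
           map_add' := by intro E₁ E₂; simp [Matrix.mul_add]
           map_smul' := fun c E => by simp [Matrix.mul_smul] } :
          Matrix k k ℂ →ₗ[ℂ] ℂ)) M := by
  classical
  have hg : ∀ i : k, HasFDerivAt (fun N : Matrix k k ℂ => N i)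
      (LinearMap.toContinuousLinearMap
        ({ toFun := fun N : Matrix k k ℂ => N i
           map_add' := fun _ _ => rfl
           map_smul' := fun _ _ => rfl } : Matrix k k ℂ →ₗ[ℂ] (k → ℂ))) M := by
    intro i
    have h := (LinearMap.toContinuousLinearMap
        ({ toFun := fun N : Matrix k k ℂ => N i
           map_add' := fun _ _ => rfl
           map_smul' := fun _ _ => rfl } : Matrix k k ℂ →ₗ[ℂ] (k → ℂ))).hasFDerivAt (x := M)
    exact h
  have h := HasFDerivAt.multilinear_comp (f := detCMM k) hg
  refine h.congr_fderiv (Eq.symm ?_)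
  refine ContinuousLinearMap.ext fun E => ?_
  have hlhs : (LinearMap.toContinuousLinearMap
        ({ toFun := fun E : Matrix k k ℂ => (M.adjugate * E).trace
           map_add' := by intro E₁ E₂; simp [Matrix.mul_add]
           map_smul' := fun c E => by simp [Matrix.mul_smul] } :
          Matrix k k ℂ →ₗ[ℂ] ℂ)) E = (M.adjugate * E).trace := rfl
  rw [hlhs, ← sum_det_updateRow M E]
  erw [@_root_.sum_apply _ _ _ _ _ _ _ ContinuousLinearMap.instIsZeroApply ContinuousLinearMap.instIsAddApply]
  refine Finset.sum_congr rfl fun i _ => ?_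
  rfl

lemma psd_diag_nonneg {M : Matrix k k ℂ} (h : M.PosSemidef) (i : k) : 0 ≤ M i i := by
  have h2 := h.dotProduct_mulVec_nonneg (Pi.single i 1)
  simpa [dotProduct, Matrix.mulVec, Pi.single_apply, Finset.sum_ite_eq,
    mul_comm] using h2

omit [DecidableEq k] in
lemma psd_smul_real {M : Matrix k k ℂ} (h : M.PosSemidef) {r : ℝ} (hr : 0 ≤ r) :
    ((r : ℂ) • M).PosSemidef := by
  refine Matrix.PosSemidef.of_dotProduct_mulVec_nonneg ?_ ?_
  · show ((r:ℂ) • M)ᴴ = (r:ℂ) • M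
    rw [conjTranspose_smul, h.1.eq]
    simp [Complex.star_def, Complex.conj_ofReal]
  · intro x
    have h2 := h.dotProduct_mulVec_nonneg x
    rw [smul_mulVec, dotProduct_smul]
    rw [Complex.le_def] at h2 ⊢
    simp only [smul_eq_mul, Complex.mul_re, Complex.mul_im, Complex.ofReal_re,
      Complex.ofReal_im, Complex.zero_re, Complex.zero_im] at h2 ⊢
    constructor
    · nlinarith [h2.1]
    · rw [← h2.2]; ring

lemma psd_dg {M : Matrix k k ℂ} (h : M.PosSemidef) : (dg M).PosSemidef :=
  Matrix.posSemidef_diagonal_iff.mpr fun i => psd_diag_nonneg h i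

lemma trace_mul_dg (M N : Matrix k k ℂ) : (M * dg N).trace = (dg M * N).trace := by
  simp [Matrix.trace, Matrix.diag, dg, Matrix.mul_diagonal, Matrix.diagonal_mul, mul_comm]

lemma dg_conjTranspose (M : Matrix k k ℂ) : (dg M)ᴴ = dg Mᴴ := by
  simp only [dg, Matrix.diagonal_conjTranspose]
  rfl

lemma tr_sandwich {l : Type*} [Fintype l] (W : Matrix k k ℂ) (A : Matrix k l ℂ)
    (H : Matrix l l ℂ) :
    (W * (A * H * Aᴴ)).trace = ((Aᴴ * W * A) * H).trace := by
  rw [show W * (A * H * Aᴴ) = (W * (A * H)) * Aᴴ by simp [Matrix.mul_assoc],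
    Matrix.trace_mul_comm]
  congr 1
  simp [Matrix.mul_assoc]

lemma dg_add (M N : Matrix k k ℂ) : dg (M + N) = dg M + dg N := by
  ext i j; by_cases h : i = j <;> simp [dg, Matrix.diagonal_apply, h]

lemma dg_smul (c : ℂ) (M : Matrix k k ℂ) : dg (c • M) = c • dg M := by
  ext i j; by_cases h : i = j <;> simp [dg, Matrix.diagonal_apply, h]

end helpers

/-- For `Y(X) = A X Aᴴ + a A diag(X) Aᴴ + b diag(C X Cᴴ) + F` with `a, b ≥ 0` and `F`
positive definite, the gradient of `X ↦ ln det Y(X)` with respect to Hermitian `X`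
equals `Aᴴ Y⁻¹ A + a diag(Aᴴ Y⁻¹ A) + b Cᴴ diag(Y⁻¹) C`, in the Frobenius
first-order-expansion sense along Hermitian perturbations. -/
theorem stmt2 {m n : ℕ} (A C : Matrix (Fin m) (Fin n) ℂ)
    (F : Matrix (Fin m) (Fin m) ℂ) (hF : F.PosDef)
    (a b : ℝ) (ha : 0 ≤ a) (hb : 0 ≤ b)
    (X : Matrix (Fin n) (Fin n) ℂ) (hX : X.PosSemidef)
    (Y : Matrix (Fin n) (Fin n) ℂ → Matrix (Fin m) (Fin m) ℂ)
    (hYdef : ∀ Z, Y Z = A * Z * Aᴴ + (a : ℂ) • (A * dg Z * Aᴴ)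
        + (b : ℂ) • dg (C * Z * Cᴴ) + F)
    (hY : IsUnit (Y X).det) :
    (fun H : Matrix (Fin n) (Fin n) ℂ =>
        logdet (Y (X + H)) - logdet (Y X)
          - (((Aᴴ * (Y X)⁻¹ * A + (a : ℂ) • dg (Aᴴ * (Y X)⁻¹ * A)
                + (b : ℂ) • (Cᴴ * dg ((Y X)⁻¹) * C))ᴴ * H).trace).re)
      =o[𝓝[{H : Matrix (Fin n) (Fin n) ℂ | H.IsHermitian}] 0]
        fun H : Matrix (Fin n) (Fin n) ℂ => ‖H‖ := by
  classical
  letI : NormedSpace ℂ (Matrix (Fin n) (Fin n) ℂ) := Matrix.frobeniusNormedSpace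
  letI : NormedSpace ℝ (Matrix (Fin n) (Fin n) ℂ) := Matrix.frobeniusNormedSpace
  letI : NormedSpace ℂ (Matrix (Fin m) (Fin m) ℂ) := Matrix.frobeniusNormedSpace
  letI : NormedSpace ℝ (Matrix (Fin m) (Fin m) ℂ) := Matrix.frobeniusNormedSpace
  -- the perturbation linear map
  set L : Matrix (Fin n) (Fin n) ℂ →ₗ[ℂ] Matrix (Fin m) (Fin m) ℂ :=
    { toFun := fun H => A * H * Aᴴ + (a:ℂ) • (A * dg H * Aᴴ) + (b:ℂ) • dg (C * H * Cᴴ)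
      map_add' := by
        intro P Q
        simp only [Matrix.mul_add, Matrix.add_mul, dg_add, smul_add]
        abel
      map_smul' := by
        intro c P
        simp only [Matrix.mul_smul, Matrix.smul_mul, dg_smul, RingHom.id_apply, smul_add,
          smul_comm c]
        } with hL
  set Lc := LinearMap.toContinuousLinearMap L with hLc
  -- positive definiteness of Y X
  have hYXpos : (Y X).PosDef := by
    rw [hYdef X]
    refine Matrix.PosDef.posSemidef_add ?_ hF
    refine Matrix.PosSemidef.add (Matrix.PosSemidef.add ?_ ?_) ?_
    · exact hX.mul_mul_conjTranspose_same A
    · exact psd_smul_real ((psd_dg hX).mul_mul_conjTranspose_same A) ha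
    · exact psd_smul_real (psd_dg (hX.mul_mul_conjTranspose_same C)) hb
  have hdetpos : (0:ℂ) < (Y X).det := hYXpos.det_pos
  have hre : 0 < (Y X).det.re := (Complex.lt_def.mp hdetpos).1
  have him : (Y X).det.im = 0 := ((Complex.lt_def.mp hdetpos).2).symm
  have hdet_eq : (Y X).det = ((Y X).det.re : ℂ) := by
    exact Complex.ext rfl (by simp [him])
  -- Y (X + H) = Y X + L H
  have hexp : ∀ H, Y (X + H) = Y X + L H := by
    intro H
    rw [hYdef, hYdef]
    show _ = _ + _ + _ + F + (A * H * Aᴴ + (a:ℂ) • (A * dg H * Aᴴ) + (b:ℂ) • dg (C * H * Cᴴ))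
    simp only [Matrix.mul_add, Matrix.add_mul, dg_add, smul_add]
    abel
  -- derivative of H ↦ Y (X + H) at 0
  have h1 : HasFDerivAt (fun H : Matrix (Fin n) (Fin n) ℂ => Y (X + H)) Lc 0 := by
    have : (fun H : Matrix (Fin n) (Fin n) ℂ => Y (X + H))
        = fun H => Y X + Lc H := by
      funext H; rw [hexp H]; rfl
    rw [this]
    exact Lc.hasFDerivAt.const_add (Y X)
  -- derivative of determinant composed
  set D := (LinearMap.toContinuousLinearMap
        ({ toFun := fun E : Matrix (Fin m) (Fin m) ℂ => ((Y X).adjugate * E).trace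
           map_add' := by intro E₁ E₂; simp [Matrix.mul_add]
           map_smul' := fun c E => by simp [Matrix.mul_smul] } :
          Matrix (Fin m) (Fin m) ℂ →ₗ[ℂ] ℂ)) with hD
  have hdet0 : HasFDerivAt (fun N : Matrix (Fin m) (Fin m) ℂ => N.det) D
      ((fun H : Matrix (Fin n) (Fin n) ℂ => Y (X + H)) 0) := by
    show HasFDerivAt _ D (Y (X + 0))
    rw [add_zero, hD]
    exact hasFDerivAt_det (Y X)
  have h2 := hdet0.comp 0 h1
  -- restrict to ℝ and compose with re
  have h3 := h2.restrictScalars ℝ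
  have h4 := Complex.reCLM.hasFDerivAt.comp 0 h3
  -- compose with log
  have hlog := Real.hasDerivAt_log (ne_of_gt hre)
  have h5 := hlog.comp_hasFDerivAt_of_eq 0 h4 (by simp)
  rw [hasFDerivAt_iff_isLittleO_nhds_zero] at h5
  -- Hermitian facts
  have hW : ((Y X)⁻¹)ᴴ = (Y X)⁻¹ := (hYXpos.isHermitian.inv).eq
  -- adjugate = det • inverse
  have hadj : (Y X).adjugate = (Y X).det • (Y X)⁻¹ := by
    rw [Matrix.inv_def, smul_smul, Ring.mul_inverse_cancel _ hY, one_smul]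
  -- Hermitian-ness of the gradient
  have hGherm : (Aᴴ * (Y X)⁻¹ * A + (a : ℂ) • dg (Aᴴ * (Y X)⁻¹ * A)
        + (b : ℂ) • (Cᴴ * dg ((Y X)⁻¹) * C))ᴴ
      = Aᴴ * (Y X)⁻¹ * A + (a : ℂ) • dg (Aᴴ * (Y X)⁻¹ * A)
        + (b : ℂ) • (Cᴴ * dg ((Y X)⁻¹) * C) := by
    simp only [conjTranspose_add, conjTranspose_smul, conjTranspose_mul,
      conjTranspose_conjTranspose, dg_conjTranspose, hW, Complex.star_def,
      Complex.conj_ofReal]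
    simp [Matrix.mul_assoc]
  -- the trace identity
  have htr : ∀ H : Matrix (Fin n) (Fin n) ℂ,
      ((Y X)⁻¹ * (A * H * Aᴴ + (a:ℂ) • (A * dg H * Aᴴ)
          + (b:ℂ) • dg (C * H * Cᴴ))).trace
      = ((Aᴴ * (Y X)⁻¹ * A + (a : ℂ) • dg (Aᴴ * (Y X)⁻¹ * A)
          + (b : ℂ) • (Cᴴ * dg ((Y X)⁻¹) * C)) * H).trace := by
    intro H
    rw [Matrix.mul_add, Matrix.mul_add, Matrix.add_mul, Matrix.add_mul,
      Matrix.trace_add, Matrix.trace_add, Matrix.trace_add, Matrix.trace_add,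
      Matrix.mul_smul, Matrix.mul_smul, Matrix.smul_mul, Matrix.smul_mul,
      Matrix.trace_smul, Matrix.trace_smul, Matrix.trace_smul, Matrix.trace_smul]
    congr 1
    · congr 1
      · exact tr_sandwich _ A H
      · congr 1
        rw [tr_sandwich _ A (dg H), trace_mul_dg]
    · congr 1
      rw [trace_mul_dg, tr_sandwich]
  -- pointwise identification of the affine expansion
  have hfun : ∀ H : Matrix (Fin n) (Fin n) ℂ,
      (Real.log ∘ (⇑Complex.reCLM ∘ ((fun N : Matrix (Fin m) (Fin m) ℂ => N.det)
          ∘ fun H : Matrix (Fin n) (Fin n) ℂ => Y (X + H)))) (0 + H)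
        - (Real.log ∘ (⇑Complex.reCLM ∘ ((fun N : Matrix (Fin m) (Fin m) ℂ => N.det)
          ∘ fun H : Matrix (Fin n) (Fin n) ℂ => Y (X + H)))) 0
        - (((Y X).det.re)⁻¹ • (Complex.reCLM.comp ((D.comp Lc).restrictScalars ℝ))) H
      = logdet (Y (X + H)) - logdet (Y X)
          - (((Aᴴ * (Y X)⁻¹ * A + (a : ℂ) • dg (Aᴴ * (Y X)⁻¹ * A)
                + (b : ℂ) • (Cᴴ * dg ((Y X)⁻¹) * C))ᴴ * H).trace).re := by
    intro H
    simp only [Function.comp_apply, zero_add, add_zero]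
    congr 1
    · show ((Y X).det.re)⁻¹ * (((Y X).adjugate * (A * H * Aᴴ + (a:ℂ) • (A * dg H * Aᴴ)
          + (b:ℂ) • dg (C * H * Cᴴ))).trace).re = _
      rw [hadj, Matrix.smul_mul, Matrix.trace_smul, hGherm, ← htr H]
      rw [hdet_eq, smul_eq_mul]
      rw [show ((((Y X).det.re : ℂ)) * (((Y X)⁻¹ * (A * H * Aᴴ + (a:ℂ) • (A * dg H * Aᴴ)
          + (b:ℂ) • dg (C * H * Cᴴ))).trace)).re
        = (Y X).det.re * (((Y X)⁻¹ * (A * H * Aᴴ + (a:ℂ) • (A * dg H * Aᴴ)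
          + (b:ℂ) • dg (C * H * Cᴴ))).trace).re by
          rw [Complex.mul_re]; simp]
      simp only [Complex.ofReal_re]
      rw [inv_mul_cancel_left₀ (ne_of_gt hre)]
  exact ((h5.congr' (Filter.Eventually.of_forall hfun)
    Filter.EventuallyEq.rfl).norm_right).mono nhdsWithin_le_nhds
end

section
/- Rate monotonicity under dimension reduction: for Hermitian matrices R ⪰ R̄ ≻ 0 of size n×n and any F ∈ ℂ^{r×n} with r ≤ n and full row rank, ln det((F R̄ Fᴴ)⁻¹ (F R Fᴴ)) ≤ ln det(R̄⁻¹ R). -/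
open Matrix
open scoped ComplexOrder

/-- Eigenvalues of a Hermitian matrix `C` with `1 - C ⪰ 0` are at most 1. -/
lemma eig_le_one {k : Type*} [Fintype k] [DecidableEq k] {C : Matrix k k ℂ}
    (hC : C.IsHermitian) (h1 : ((1 : Matrix k k ℂ) - C).PosSemidef) (i : k) :
    hC.eigenvalues i ≤ 1 := by
  have h' := h1.re_dotProduct_nonneg (hC.eigenvectorBasis i)
  rw [sub_mulVec, one_mulVec, dotProduct_sub, map_sub] at h'
  have h : 0 ≤
      RCLike.re (star ⇑(hC.eigenvectorBasis i) ⬝ᵥ ⇑(hC.eigenvectorBasis i)) -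
        RCLike.re (star ⇑(hC.eigenvectorBasis i) ⬝ᵥ C *ᵥ ⇑(hC.eigenvectorBasis i)) := h'
  have hvv : RCLike.re (star ⇑(hC.eigenvectorBasis i) ⬝ᵥ ⇑(hC.eigenvectorBasis i)) = 1 := by
    have h2 : (star ⇑(hC.eigenvectorBasis i) ⬝ᵥ ⇑(hC.eigenvectorBasis i))
        = (inner ℂ (hC.eigenvectorBasis i) (hC.eigenvectorBasis i) : ℂ) := by
      rw [EuclideanSpace.inner_eq_star_dotProduct, dotProduct_comm]
    rw [h2, inner_self_eq_norm_sq_to_K, hC.eigenvectorBasis.orthonormal.1 i]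
    simp
  rw [hvv, ← hC.eigenvalues_eq] at h
  linarith

open scoped MatrixOrder in
/-- Monotonicity of the (real part of the) determinant in the Loewner order. -/
lemma det_re_le_det_re {k : Type*} [Fintype k] [DecidableEq k] {A B : Matrix k k ℂ}
    (hA : A.PosSemidef) (hB : B.PosDef) (hBA : (B - A).PosSemidef) :
    A.det.re ≤ B.det.re := by
  set S := CFC.sqrt B with hSdef
  have hSS : S * S = B := CFC.sqrt_mul_sqrt_self B hB.posSemidef.nonneg
  have hSH : S.IsHermitian := (CFC.sqrt_nonneg B).posSemidef.1
  have hdetB : det S * det S = det B := by rw [← det_mul, hSS]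
  have hdetBne : det B ≠ 0 := hB.det_pos.ne'
  have hSu : IsUnit S.det := by
    refine isUnit_iff_ne_zero.mpr fun h => hdetBne ?_
    rw [← hdetB, h, mul_zero]
  have hSiS : S⁻¹ * S = 1 := nonsing_inv_mul S hSu
  have hSSi : S * S⁻¹ = 1 := mul_nonsing_inv S hSu
  have hSiH : (S⁻¹)ᴴ = S⁻¹ := hSH.inv
  set C := S⁻¹ * A * S⁻¹ with hCdef
  have hC : C.PosSemidef := by
    have := hA.conjTranspose_mul_mul_same S⁻¹
    rwa [hSiH] at this
  have hSBSi : S⁻¹ * B * S⁻¹ = 1 := by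
    rw [← hSS, ← Matrix.mul_assoc, Matrix.mul_assoc (S⁻¹ * S), hSiS, Matrix.one_mul, hSSi]
  have h1C : ((1 : Matrix k k ℂ) - C).PosSemidef := by
    have := hBA.conjTranspose_mul_mul_same S⁻¹
    rw [hSiH] at this
    have heq : S⁻¹ * (B - A) * S⁻¹ = 1 - C := by
      rw [Matrix.mul_sub, Matrix.sub_mul, hSBSi, hCdef]
    rwa [heq] at this
  have hAeq : A = S * C * S := by
    rw [hCdef, ← Matrix.mul_assoc, ← Matrix.mul_assoc, hSSi, Matrix.one_mul,
      Matrix.mul_assoc, hSiS, Matrix.mul_one]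
  set p : ℝ := ∏ i, hC.1.eigenvalues i with hpdef
  have hdetC : det C = (p : ℂ) := by
    rw [hC.1.det_eq_prod_eigenvalues, hpdef]
    push_cast
    rfl
  have hdetA : det A = det B * (p : ℂ) := by
    rw [hAeq, det_mul, det_mul, hdetC, ← hdetB]
    ring
  have hp0 : 0 ≤ p := Finset.prod_nonneg fun i _ => hC.eigenvalues_nonneg i
  have hp1 : p ≤ 1 :=
    Finset.prod_le_one (fun i _ => hC.eigenvalues_nonneg i) fun i _ => eig_le_one hC.1 h1C i
  have hBre : 0 < B.det.re := by
    have := hB.det_pos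
    rw [Complex.lt_def] at this
    simpa using this.1
  have hAre : A.det.re = B.det.re * p := by
    rw [hdetA, Complex.mul_re]
    simp
  rw [hAre]
  calc B.det.re * p ≤ B.det.re * 1 := by
        exact mul_le_mul_of_nonneg_left hp1 hBre.le
    _ = B.det.re := mul_one _

lemma conjTranspose_mulVec_ne {r n : ℕ} (F : Matrix (Fin r) (Fin n) ℂ)
    (hrank : F.rank = r) {x : Fin r → ℂ} (hx : x ≠ 0) : Fᴴ *ᵥ x ≠ 0 := by
  have hr : Fᴴ.rank = r := by rw [Matrix.rank_conjTranspose, hrank]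
  have hrange : Module.finrank ℂ (LinearMap.range (Fᴴ).mulVecLin) = r := hr
  have hrn := LinearMap.finrank_range_add_finrank_ker (Fᴴ).mulVecLin
  rw [hrange] at hrn
  simp only [Module.finrank_pi, Fintype.card_fin] at hrn
  have hker : LinearMap.ker (Fᴴ).mulVecLin = ⊥ :=
    Submodule.finrank_eq_zero.mp (by omega)
  intro h
  exact hx (by simpa [hker] using (LinearMap.mem_ker.mpr (show (Fᴴ).mulVecLin x = 0 by
    simpa [Matrix.mulVecLin_apply] using h)))

set_option maxHeartbeats 1600000 in
open scoped MatrixOrder in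
/-- Rate monotonicity under dimension reduction: for `R ⪰ R̄ ≻ 0` and a full-row-rank
combiner `F ∈ ℂ^{r×n}` with `r ≤ n`,
`ln det((F R̄ Fᴴ)⁻¹ (F R Fᴴ)) ≤ ln det(R̄⁻¹ R)`. -/
theorem stmt16 {r n : ℕ} (R Rb : Matrix (Fin n) (Fin n) ℂ)
    (hRb : Rb.PosDef) (hR : R.IsHermitian) (hdiff : (R - Rb).PosSemidef)
    (hrn : r ≤ n) (F : Matrix (Fin r) (Fin n) ℂ) (hrank : F.rank = r) :
    logdet ((F * Rb * Fᴴ)⁻¹ * (F * R * Fᴴ)) ≤ logdet (Rb⁻¹ * R) := by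
  classical
  -- the square root of the difference
  set W := CFC.sqrt (R - Rb) with hWdef
  have hWH : Wᴴ = W := (CFC.sqrt_nonneg (R - Rb)).posSemidef.1
  have hWW : W * W = R - Rb := CFC.sqrt_mul_sqrt_self (R - Rb) hdiff.nonneg
  have hRdecomp : R = Rb + W * W := by rw [hWW]; abel
  -- the compressed covariance is positive definite
  set B := F * Rb * Fᴴ with hBdef
  have hBpsd := hRb.posSemidef.mul_mul_conjTranspose_same F
  have hB : B.PosDef := by
    refine Matrix.PosDef.of_dotProduct_mulVec_pos hBpsd.1 fun x hx => ?_
    have hy := conjTranspose_mulVec_ne F hrank hx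
    have : star x ⬝ᵥ (B *ᵥ x) = star (Fᴴ *ᵥ x) ⬝ᵥ (Rb *ᵥ (Fᴴ *ᵥ x)) := by
      simp [hBdef, ← mulVec_mulVec, dotProduct_mulVec, star_mulVec]
    rw [this]
    exact hRb.dotProduct_mulVec_pos hy
  have hBu : IsUnit B.det := hB.det_pos.ne'.isUnit
  have hRbu : IsUnit Rb.det := hRb.det_pos.ne'.isUnit
  have hBiB : B⁻¹ * B = 1 := nonsing_inv_mul B hBu
  have hBBi : B * B⁻¹ = 1 := mul_nonsing_inv B hBu
  have hRbiRb : Rb⁻¹ * Rb = 1 := nonsing_inv_mul Rb hRbu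
  -- square root of Rb
  set Q := CFC.sqrt Rb with hQdef
  have hQH : Qᴴ = Q := (CFC.sqrt_nonneg Rb).posSemidef.1
  have hQQ : Q * Q = Rb := CFC.sqrt_mul_sqrt_self Rb hRb.posSemidef.nonneg
  have hQu : IsUnit Q.det := by
    refine isUnit_iff_ne_zero.mpr fun h => hRb.det_pos.ne' ?_
    rw [← hQQ, det_mul, h, mul_zero]
  have hQiQ : Q⁻¹ * Q = 1 := nonsing_inv_mul Q hQu
  have hQQi : Q * Q⁻¹ = 1 := mul_nonsing_inv Q hQu
  have hQiH : (Q⁻¹)ᴴ = Q⁻¹ := ((CFC.sqrt_nonneg Rb).posSemidef.1).inv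
  have hRbinv : Rb⁻¹ = Q⁻¹ * Q⁻¹ := by rw [← hQQ, Matrix.mul_inv_rev]
  -- the projection P
  set K := Fᴴ * B⁻¹ * F with hKdef
  set P := Q * K * Q with hPdef
  have hPH : Pᴴ = P := by
    rw [hPdef, hKdef]
    simp only [conjTranspose_mul, conjTranspose_conjTranspose, hQH, hB.inv.isHermitian.eq]
    simp [Matrix.mul_assoc]
  have hFQQF : F * Q * (Q * Fᴴ) = B := by
    rw [hBdef, ← hQQ]; simp [Matrix.mul_assoc]
  have hPP : P * P = P := by
    rw [hPdef, hKdef]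
    simp only [Matrix.mul_assoc]
    rw [show B⁻¹ * (F * (Q * (Q * (Fᴴ * (B⁻¹ * (F * Q)))))) =
        B⁻¹ * (F * Q * (Q * Fᴴ)) * (B⁻¹ * (F * Q)) by simp [Matrix.mul_assoc],
      hFQQF, ← Matrix.mul_assoc, hBiB, Matrix.one_mul]
    simp [Matrix.mul_assoc]
  have h1P : ((1 : Matrix (Fin n) (Fin n) ℂ) - P).PosSemidef := by
    have heq : (1 - P) = (1 - P)ᴴ * (1 - P) := by
      rw [conjTranspose_sub, hPH, conjTranspose_one, Matrix.mul_sub, Matrix.sub_mul,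
        Matrix.sub_mul, hPP]
      simp
    rw [heq]
    exact posSemidef_conjTranspose_mul_self _
  -- key PSD fact: Rb⁻¹ - K ⪰ 0
  have hQiPQi : Q⁻¹ * (1 - P) * Q⁻¹ = Rb⁻¹ - K := by
    rw [Matrix.mul_sub, Matrix.sub_mul, Matrix.mul_one, hPdef, hRbinv]
    congr 1
    rw [← Matrix.mul_assoc, ← Matrix.mul_assoc, hQiQ, Matrix.one_mul, Matrix.mul_assoc, hQQi, Matrix.mul_one]
  have hKey : (Rb⁻¹ - K).PosSemidef := by
    have := h1P.conjTranspose_mul_mul_same Q⁻¹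
    rwa [hQiH, hQiPQi] at this
  -- the two compressed PSD matrices
  set Mt := W * K * W with hMtdef
  set N := W * Rb⁻¹ * W with hNdef
  have hKpsd : K.PosSemidef := by
    have := hB.inv.posSemidef.conjTranspose_mul_mul_same F
    rwa [← hKdef] at this
  have hMt : Mt.PosSemidef := by
    have := hKpsd.conjTranspose_mul_mul_same W
    rwa [hWH] at this
  have hN : N.PosSemidef := by
    have := hRb.inv.posSemidef.conjTranspose_mul_mul_same W
    rwa [hWH] at this
  have hNMt : (N - Mt).PosSemidef := by
    have := hKey.conjTranspose_mul_mul_same W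
    rwa [hWH, Matrix.mul_sub, Matrix.sub_mul, ← hNdef, ← hMtdef] at this
  -- determinant identities
  have hdetR : det (Rb⁻¹ * R) = det (1 + N) := by
    rw [hRdecomp, Matrix.mul_add, hRbiRb, ← Matrix.mul_assoc,
      show Rb⁻¹ * W * W = (Rb⁻¹ * W) * W from rfl, det_one_add_mul_comm]
    congr 1
    rw [hNdef]
    simp [Matrix.mul_assoc]
  have hdetL : det (B⁻¹ * (F * R * Fᴴ)) = det (1 + Mt) := by
    have hFRF : F * R * Fᴴ = B + F * (W * W) * Fᴴ := by
      rw [hRdecomp, hBdef]; simp [Matrix.mul_add, Matrix.add_mul]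
    rw [hFRF, Matrix.mul_add, hBiB,
      show B⁻¹ * (F * (W * W) * Fᴴ) = (B⁻¹ * (F * W)) * (W * Fᴴ) by simp [Matrix.mul_assoc],
      det_one_add_mul_comm]
    congr 1
    rw [hMtdef, hKdef]
    simp [Matrix.mul_assoc]
  -- positive definiteness of 1 + Mt and 1 + N
  have h1Mt : ((1 : Matrix (Fin n) (Fin n) ℂ) + Mt).PosDef := Matrix.PosDef.one.add_posSemidef hMt
  have h1N : ((1 : Matrix (Fin n) (Fin n) ℂ) + N).PosDef := Matrix.PosDef.one.add_posSemidef hN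
  have hsub : ((1 + N) - (1 + Mt)).PosSemidef := by
    rwa [add_sub_add_left_eq_sub]
  have hdetle : (1 + Mt).det.re ≤ (1 + N).det.re :=
    det_re_le_det_re h1Mt.posSemidef h1N hsub
  have hpos : 0 < (1 + Mt).det.re := by
    have := h1Mt.det_pos
    rw [Complex.lt_def] at this
    simpa using this.1
  rw [logdet, logdet, hdetR, hdetL]
  exact Real.log_le_log hpos hdetle
end
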